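/- Let (a, b, m) be a Markov triple and r = ‖b‖²/‖a‖². Then r is a positive integer, i.e. there exists n ∈ ℕ with r = n. -/

import Mathlib

/-- If `N^k * n0 = M_k * n0^k` for every `k`, with `n0 > 0`, then `n0 ∣ N`. -/
lemma markov_aux_dvd (N n0 : ℕ) (hn0 : 0 < n0)
    (hdiv : ∀ k : ℕ, ∃ M : ℕ, N ^ k * n0 = M * n0 ^ k) : n0 ∣ N := by
  obtain ⟨g, p, q, hgpos, hp, hq, hcop⟩ :
      ∃ g p q : ℕ, 0 < g ∧ N = g * p ∧ n0 = g * q ∧ p.Coprime q := by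
    have hgpos : 0 < Nat.gcd N n0 := Nat.gcd_pos_of_pos_right _ hn0
    exact ⟨Nat.gcd N n0, N / Nat.gcd N n0, n0 / Nat.gcd N n0, hgpos,
      (Nat.mul_div_cancel' (Nat.gcd_dvd_left N n0)).symm,
      (Nat.mul_div_cancel' (Nat.gcd_dvd_right N n0)).symm,
      Nat.coprime_div_gcd_div_gcd hgpos⟩
  have hqpos : 0 < q := by
    rcases Nat.eq_zero_or_pos q with h | h
    · rw [h, Nat.mul_zero] at hq; omega
    · exact h
  have hq1 : q = 1 := by
    by_contra hcon
    have hq2 : 2 ≤ q := by omega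
    have hle : ∀ k : ℕ, q ^ k ≤ g * q := by
      intro k
      obtain ⟨M, hM⟩ := hdiv k
      rw [hp, hq, mul_pow, mul_pow] at hM
      have h2 : p ^ k * (g * q) = M * q ^ k := by
        have hgk : 0 < g ^ k := pow_pos hgpos k
        apply Nat.eq_of_mul_eq_mul_left hgk
        calc g ^ k * (p ^ k * (g * q)) = g ^ k * p ^ k * (g * q) := by ring
          _ = M * (g ^ k * q ^ k) := hM
          _ = g ^ k * (M * q ^ k) := by ring
      have hcp : (q ^ k).Coprime (p ^ k) := Nat.Coprime.pow k k (hcop.symm)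
      have h3 : q ^ k ∣ p ^ k * (g * q) := ⟨M, by rw [h2, Nat.mul_comm]⟩
      have hdvd : q ^ k ∣ g * q := hcp.dvd_of_dvd_mul_left h3
      exact Nat.le_of_dvd (Nat.mul_pos hgpos hqpos) hdvd
    have h4 := hle (g * q)
    have h5 : g * q < q ^ (g * q) := Nat.lt_pow_self hq2
    omega
  rw [hq, hq1, Nat.mul_one] at *
  exact ⟨p, hp⟩

/-- The Euclidean norm of a vector in `ℝ^n`. -/
noncomputable def euclNorm {n : ℕ} (v : Fin n → ℝ) : ℝ :=
  Real.sqrt (∑ i, v i ^ 2)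

/-- For a Markov triple `(a, b, m)` (i.e. `a`, `b` have strictly positive
integer entries, `m` has natural number entries, `mᵀ a = b` and `m b = r a` with
`r = ‖b‖²/‖a‖²`), the ratio `r` is a positive integer. -/
theorem markov_index_integer (s t : ℕ) (hs : 0 < s) (ht : 0 < t)
    (a : Fin s → ℝ) (b : Fin t → ℝ) (m : Matrix (Fin s) (Fin t) ℝ)
    (ha : ∀ i, ∃ n : ℕ, 0 < n ∧ a i = n)
    (hb : ∀ j, ∃ n : ℕ, 0 < n ∧ b j = n)
    (hm : ∀ i j, ∃ n : ℕ, m i j = n)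
    (hta : m.transpose.mulVec a = b)
    (r : ℝ) (hr : r = euclNorm b ^ 2 / euclNorm a ^ 2)
    (hmb : m.mulVec b = r • a) :
    ∃ n : ℕ, 0 < n ∧ r = n := by
  -- componentwise equations
  have hbj : ∀ j, b j = ∑ i, m i j * a i := by
    intro j
    rw [← hta]
    simp [Matrix.mulVec, dotProduct, Matrix.transpose]
  have hrai : ∀ i, r * a i = ∑ j, m i j * b j := by
    intro i
    have := congrFun hmb i
    simp only [Matrix.mulVec, dotProduct, Pi.smul_apply, smul_eq_mul] at this
    rw [← this]
  -- positivity of entries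
  have hapos : ∀ i, 0 < a i := by
    intro i; obtain ⟨n, hn, h⟩ := ha i; rw [h]; exact_mod_cast hn
  have hbpos : ∀ j, 0 < b j := by
    intro j; obtain ⟨n, hn, h⟩ := hb j; rw [h]; exact_mod_cast hn
  -- r > 0
  have hrpos : 0 < r := by
    rw [hr]
    apply div_pos
    · rw [euclNorm, Real.sq_sqrt (Finset.sum_nonneg fun j _ => sq_nonneg _)]
      exact Finset.sum_pos (fun j _ => pow_pos (hbpos j) 2) ⟨⟨0, ht⟩, Finset.mem_univ _⟩
    · rw [euclNorm, Real.sq_sqrt (Finset.sum_nonneg fun i _ => sq_nonneg _)]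
      exact Finset.sum_pos (fun i _ => pow_pos (hapos i) 2) ⟨⟨0, hs⟩, Finset.mem_univ _⟩
  -- key: all powers of r times a i (resp. b j) are natural numbers
  have key : ∀ k : ℕ, (∀ i, ∃ n : ℕ, r ^ k * a i = n) ∧ (∀ j, ∃ n : ℕ, r ^ k * b j = n) := by
    intro k
    induction k with
    | zero =>
      constructor
      · intro i; obtain ⟨n, _, h⟩ := ha i; exact ⟨n, by simpa using h⟩
      · intro j; obtain ⟨n, _, h⟩ := hb j; exact ⟨n, by simpa using h⟩
    | succ k ih =>
      obtain ⟨iha, ihb⟩ := ih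
      have hA : ∀ i, ∃ n : ℕ, r ^ (k + 1) * a i = n := by
        intro i
        have heq : r ^ (k + 1) * a i = ∑ j, m i j * (r ^ k * b j) := by
          have h1 : r ^ (k + 1) * a i = r ^ k * (r * a i) := by ring
          rw [h1, hrai i, Finset.mul_sum]
          exact Finset.sum_congr rfl fun j _ => by ring
        rw [heq]
        choose nm' hnm using hm
        choose nb' hnb using ihb
        refine ⟨∑ j, nm' i j * nb' j, ?_⟩
        simp only [hnm, hnb]
        push_cast
        rfl
      refine ⟨hA, fun j => ?_⟩
      have heq : r ^ (k + 1) * b j = ∑ i, m i j * (r ^ (k + 1) * a i) := by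
        rw [hbj j, Finset.mul_sum]
        exact Finset.sum_congr rfl fun i _ => by ring
      rw [heq]
      choose nm' hnm using hm
      choose na' hna using hA
      refine ⟨∑ i, nm' i j * na' i, ?_⟩
      simp only [hnm, hna]
      push_cast
      rfl
  -- set up the arithmetic
  set i0 : Fin s := ⟨0, hs⟩
  obtain ⟨n0, hn0pos, hn0⟩ := ha i0
  obtain ⟨N, hN⟩ := (key 1).1 i0
  rw [pow_one, hn0] at hN
  have hn0ne : (n0 : ℝ) ≠ 0 := by exact_mod_cast hn0pos.ne'
  have hrN : r = (N : ℝ) / n0 := by rw [eq_div_iff hn0ne]; exact hN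
  -- naturals: for all k, N^k * n0 = Mk * n0^k
  have hdiv : ∀ k : ℕ, ∃ M : ℕ, N ^ k * n0 = M * n0 ^ k := by
    intro k
    obtain ⟨M, hM⟩ := (key k).1 i0
    rw [hn0, hrN, div_pow, div_mul_eq_mul_div, div_eq_iff (pow_ne_zero k hn0ne)] at hM
    exact ⟨M, by exact_mod_cast hM⟩
  obtain ⟨p, hNp⟩ := markov_aux_dvd N n0 hn0pos hdiv
  refine ⟨p, ?_, ?_⟩
  · rcases Nat.eq_zero_or_pos p with h | h
    · exfalso
      rw [hrN, hNp, h, Nat.mul_zero] at hrpos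
      simp at hrpos
    · exact h
  · rw [hrN, hNp]
    push_cast
    field_simp
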